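/- For 0 ≤ l ≤ d−1 and n ≥ 0, ‖T^l·Q̄_n·f‖ = |T^l·Q̄_n·f − T^l·Q̄_{n+1}| = q^{l − (n+1)d} < 1, and the nearest element of A to T^l·Q̄_n·f is T^l·Q̄_{n+1} (up to the scalar relating Q̄ and Q). Consequently the map B → q^{−ℕ} sending T^l·Q̄_n to ‖T^l·Q̄_n·f‖ is a bijection from B onto the set { q^{−m} : m ≥ 1 } of possible errors. -/
import Mathlib


open Polynomial

/-- `‖x‖`: distance from `x ∈ K` to the nearest element of `A = F_q[T]`. -/
noncomputable def pnorm {Fq K : Type*} [Field Fq] [Field K]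
    (ι : Polynomial Fq →+* K) (v : AbsoluteValue K ℝ) (x : K) : ℝ :=
  sInf (Set.range fun p : Polynomial Fq => v (x - ι p))

lemma ultra_add_eq {K : Type*} [Field K] (v : AbsoluteValue K ℝ)
    (hna : ∀ x y : K, v (x + y) ≤ max (v x) (v y))
    {x y : K} (h : v y < v x) : v (x + y) = v x := by
  refine le_antisymm ((hna x y).trans (max_le le_rfl h.le)) ?_
  by_contra hlt
  push_neg at hlt
  have h3 : v x ≤ max (v (x + y)) (v y) := by
    have := hna (x + y) (-y)
    rwa [v.map_neg, show x + y + -y = x by ring] at this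
  exact absurd h3 (not_le.mpr (max_lt hlt h))

lemma div_unique' (d r r' n n' : ℕ) (hd : 0 < d) (hr : r < d) (hr' : r' < d)
    (h : d * n + r = d * n' + r') : n = n' ∧ r = r' := by
  have h1 : (d * n + r) / d = n := by
    rw [Nat.mul_add_div hd, Nat.div_eq_of_lt hr, add_zero]
  have h2 : (d * n' + r') / d = n' := by
    rw [Nat.mul_add_div hd, Nat.div_eq_of_lt hr', add_zero]
  have hn : n = n' := by rw [← h1, ← h2, h]
  subst hn
  exact ⟨rfl, Nat.add_left_cancel h⟩

lemma exp_inj (d l n l' n' : ℕ) (hd : 0 < d) (hl : l < d) (hl' : l' < d)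
    (h : d * (n + 1) - l = d * (n' + 1) - l') : l = l' ∧ n = n' := by
  rw [Nat.mul_succ, Nat.mul_succ] at h
  have h2 : d * n + (d - 1 - l) = d * n' + (d - 1 - l') := by
    set A := d * n; set B := d * n'; omega
  obtain ⟨hn, hr⟩ := div_unique' d _ _ n n' hd (by omega) (by omega) h2
  exact ⟨by omega, hn⟩

/-- For `0 ≤ l ≤ d-1`, `n ≥ 0`:
`‖T^l Q̄_n f‖ = |T^l Q̄_n f - T^l c^n Q_{n+1}| = q^{l-(n+1)d} < 1`, the nearest element of `A`
to `T^l Q̄_n f` is `T^l c^n Q_{n+1}` (i.e. `T^l Q̄_{n+1}` up to the scalar relating `Q̄` and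
`Q`), and the error map `B → q^{-ℕ}`, `T^l Q̄_n ↦ ‖T^l Q̄_n f‖`, is a bijection onto
`{q^{-m} : m ≥ 1}`. -/
theorem stmt_6 {Fq K : Type*} [Field Fq] [Fintype Fq] [Field K]
    (ι : Polynomial Fq →+* K) (v : AbsoluteValue K ℝ)
    (hna : ∀ x y : K, v (x + y) ≤ max (v x) (v y))
    (hdeg : ∀ g : Polynomial Fq, g ≠ 0 → v (ι g) = (Fintype.card Fq : ℝ) ^ g.natDegree)
    (a : Polynomial Fq) (d : ℕ) (hda : a.natDegree = d) (hd : 0 < d)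
    (b : Fq) (hb : b ≠ 0)
    (f : K) (hroot : f ^ 2 = ι a * f + ι (C b)) (hf : 1 < v f)
    (Q : ℕ → Polynomial Fq) (hQ0 : Q 0 = 1) (hQ1 : Q 1 = a)
    (hQrec : ∀ n, Q (n + 2) = a * Q (n + 1) + C b * Q n)
    (c : Fq) (hc : c ≠ 0) (hca : (C c * a).Monic)
    (Qbar : ℕ → Polynomial Fq) (hQbar : ∀ n, Qbar n = C (c ^ n) * Q n) :
    (∀ l : ℕ, l ≤ d - 1 → ∀ n : ℕ,
      v (ι (X ^ l * Qbar n) * f - ι (X ^ l * C (c ^ n) * Q (n + 1))) =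
        (Fintype.card Fq : ℝ) ^ l * ((Fintype.card Fq : ℝ) ^ (d * (n + 1)))⁻¹ ∧
      pnorm ι v (ι (X ^ l * Qbar n) * f) =
        (Fintype.card Fq : ℝ) ^ l * ((Fintype.card Fq : ℝ) ^ (d * (n + 1)))⁻¹ ∧
      (Fintype.card Fq : ℝ) ^ l * ((Fintype.card Fq : ℝ) ^ (d * (n + 1)))⁻¹ < 1 ∧
      (∀ μ : Polynomial Fq, μ ≠ X ^ l * C (c ^ n) * Q (n + 1) →
        v (ι (X ^ l * Qbar n) * f - ι (X ^ l * C (c ^ n) * Q (n + 1))) <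
          v (ι (X ^ l * Qbar n) * f - ι μ))) ∧
    Function.Injective
      (fun p : Fin d × ℕ => pnorm ι v (ι (X ^ (p.1 : ℕ) * Qbar p.2) * f)) ∧
    Set.range (fun p : Fin d × ℕ => pnorm ι v (ι (X ^ (p.1 : ℕ) * Qbar p.2) * f)) =
      {r : ℝ | ∃ m : ℕ, 1 ≤ m ∧ r = ((Fintype.card Fq : ℝ) ^ m)⁻¹} := by
  set q : ℝ := (Fintype.card Fq : ℝ) with hqdef
  have hq1 : (1 : ℝ) < q := by
    rw [hqdef]; exact_mod_cast Fintype.one_lt_card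
  have hq0 : (0 : ℝ) < q := lt_trans one_pos hq1
  -- basic values
  have ha0 : a ≠ 0 := by intro h; rw [h, natDegree_zero] at hda; omega
  have hva : v (ι a) = q ^ d := by rw [hdeg a ha0, hda]
  have hbC : (C b : Polynomial Fq) ≠ 0 := C_ne_zero.mpr hb
  have hvb : v (ι (C b)) = 1 := by rw [hdeg _ hbC, natDegree_C, pow_zero]
  have hf0 : (0 : ℝ) < v f := lt_trans one_pos hf
  have hqd1 : (1 : ℝ) ≤ q ^ d := one_le_pow₀ hq1.le
  have hvf : v f = q ^ d := by
    have h1 : v (f ^ 2) = q ^ d * v f := by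
      rw [hroot, ultra_add_eq v hna (by rw [v.map_mul, hva, hvb]; nlinarith),
        v.map_mul, hva]
    rw [v.map_pow] at h1
    have := mul_right_cancel₀ (ne_of_gt hf0) (by rw [← h1]; ring : v f * v f = q ^ d * v f)
    exact this
  set g : K := ι a - f with hg
  have hfg : f * g = - ι (C b) := by rw [hg]; linear_combination -hroot
  have hvg : v g = (q ^ d)⁻¹ := by
    have h1 : q ^ d * v g = 1 := by
      rw [← hvf, ← v.map_mul, hfg, v.map_neg, hvb]
    exact (inv_eq_of_mul_eq_one_right h1).symm
  have hE : ∀ n, ι (Q n) * f - ι (Q (n + 1)) = -g ^ (n + 1) := by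
    intro n
    induction n with
    | zero => simp only [hQ0, hQ1, map_one, one_mul, pow_one, hg]; ring
    | succ k ih =>
      rw [hQrec k, map_add, map_mul, map_mul]
      rw [hg] at ih ⊢
      linear_combination (ι a - f) * ih + ι (Q k) * hroot
  -- norm of monomials
  have hvX : ∀ l : ℕ, v (ι (X ^ l : Polynomial Fq)) = q ^ l := by
    intro l
    rw [hdeg _ (pow_ne_zero _ X_ne_zero), natDegree_X_pow]
  have hvc : ∀ n : ℕ, v (ι (C (c ^ n) : Polynomial Fq)) = 1 := by
    intro n
    rw [hdeg _ (C_ne_zero.mpr (pow_ne_zero n hc)), natDegree_C, pow_zero]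
  -- The core statement, for l < d
  have Hmain : ∀ l : ℕ, l < d → ∀ n : ℕ,
      v (ι (X ^ l * Qbar n) * f - ι (X ^ l * C (c ^ n) * Q (n + 1))) =
        q ^ l * (q ^ (d * (n + 1)))⁻¹ ∧
      pnorm ι v (ι (X ^ l * Qbar n) * f) = q ^ l * (q ^ (d * (n + 1)))⁻¹ ∧
      q ^ l * (q ^ (d * (n + 1)))⁻¹ < 1 ∧
      (∀ μ : Polynomial Fq, μ ≠ X ^ l * C (c ^ n) * Q (n + 1) →
        v (ι (X ^ l * Qbar n) * f - ι (X ^ l * C (c ^ n) * Q (n + 1))) <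
          v (ι (X ^ l * Qbar n) * f - ι μ)) := by
    intro l hld n
    set x : K := ι (X ^ l * Qbar n) * f with hx
    set μ₀ : Polynomial Fq := X ^ l * C (c ^ n) * Q (n + 1) with hμ₀
    set ε : ℝ := q ^ l * (q ^ (d * (n + 1)))⁻¹ with hε
    have hdiff : x - ι μ₀ = ι (X ^ l) * ι (C (c ^ n)) * (-g ^ (n + 1)) := by
      rw [hx, hμ₀, hQbar n, ← hE n]
      simp only [map_mul]
      ring
    have hvdiff : v (x - ι μ₀) = ε := by
      rw [hdiff, v.map_mul, v.map_mul, v.map_neg, v.map_pow, hvg, hvX, hvc,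
        mul_one, ← inv_pow, ← pow_mul, inv_pow]
    have hlM : l < d * (n + 1) := lt_of_lt_of_le hld (Nat.le_mul_of_pos_right d (Nat.succ_pos n))
    have hMpos : (0 : ℝ) < q ^ (d * (n + 1)) := pow_pos hq0 _
    have hε1 : ε < 1 := by
      rw [hε, ← div_eq_mul_inv, div_lt_one hMpos]
      exact pow_lt_pow_right₀ hq1 hlM
    have hε0 : 0 < ε := mul_pos (pow_pos hq0 l) (inv_pos.mpr hMpos)
    have hstrict : ∀ μ : Polynomial Fq, μ ≠ μ₀ → ε < v (x - ι μ) := by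
      intro μ hμ
      have hδ0 : μ₀ - μ ≠ 0 := sub_ne_zero.mpr (Ne.symm hμ)
      have hδ1 : (1 : ℝ) ≤ v (ι (μ₀ - μ)) := by
        rw [hdeg _ hδ0]; exact one_le_pow₀ hq1.le
      have hsplit : x - ι μ = ι (μ₀ - μ) + (x - ι μ₀) := by
        rw [map_sub]; ring
      rw [hsplit, ultra_add_eq v hna (by rw [hvdiff]; exact lt_of_lt_of_le hε1 hδ1)]
      exact lt_of_lt_of_le hε1 hδ1
    have hpn : pnorm ι v x = ε := by
      have hleast : IsLeast (Set.range fun p : Polynomial Fq => v (x - ι p)) ε := by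
        constructor
        · exact ⟨μ₀, hvdiff⟩
        · rintro r ⟨p, rfl⟩
          by_cases hp : p = μ₀
          · subst hp; simpa using hvdiff.ge
          · exact (hstrict p hp).le
      exact hleast.csInf_eq
    exact ⟨hvdiff, hpn, hε1, fun μ hμ => by rw [hvdiff]; exact hstrict μ hμ⟩
  -- pnorm formula in inverse-power form
  have hpnval : ∀ (l n : ℕ), l < d →
      pnorm ι v (ι (X ^ l * Qbar n) * f) = (q ^ (d * (n + 1) - l))⁻¹ := by
    intro l n hld
    rw [(Hmain l hld n).2.1]
    have hlM : l ≤ d * (n + 1) :=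
      le_of_lt (lt_of_lt_of_le hld (Nat.le_mul_of_pos_right d (Nat.succ_pos n)))
    have hsplit : q ^ (d * (n + 1)) = q ^ (d * (n + 1) - l) * q ^ l := by
      rw [← pow_add, Nat.sub_add_cancel hlM]
    rw [hsplit, mul_comm (q ^ (d * (n + 1) - l)) (q ^ l), mul_inv, ← mul_assoc,
      mul_inv_cancel₀ (pow_ne_zero l (ne_of_gt hq0)), one_mul]
  have hsm : StrictMono (fun m : ℕ => q ^ m) := fun m n hmn => pow_lt_pow_right₀ hq1 hmn
  have hpowinj : Function.Injective (fun m : ℕ => q ^ m) := hsm.injective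
  refine ⟨fun l hl n => Hmain l (by omega) n, ?_, ?_⟩
  · rintro ⟨l, n⟩ ⟨l', n'⟩ h
    simp only [hpnval _ _ l.isLt, hpnval _ _ l'.isLt] at h
    have h3 : d * (n + 1) - (l : ℕ) = d * (n' + 1) - (l' : ℕ) :=
      hpowinj (inv_injective h)
    obtain ⟨hl, hn⟩ := exp_inj d _ _ _ _ hd l.isLt l'.isLt h3
    simp [Prod.ext_iff, Fin.ext_iff, hl, hn]
  · ext r
    constructor
    · rintro ⟨⟨l, n⟩, rfl⟩
      simp only [hpnval _ _ l.isLt]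
      refine ⟨d * (n + 1) - (l : ℕ), ?_, rfl⟩
      have h1 : d * (n + 1) = d * n + d := Nat.mul_succ d n
      have h2 : (l : ℕ) < d := l.isLt
      set A := d * n
      omega
    · rintro ⟨m, hm, rfl⟩
      have hmod : (m - 1) % d < d := Nat.mod_lt _ hd
      refine ⟨(⟨d - 1 - (m - 1) % d, by omega⟩, (m - 1) / d), ?_⟩
      simp only [hpnval _ _ (show d - 1 - (m - 1) % d < d by omega)]
      have hdm : d * ((m - 1) / d) + (m - 1) % d = m - 1 := Nat.div_add_mod (m - 1) d
      have he : d * ((m - 1) / d + 1) - (d - 1 - (m - 1) % d) = m := by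
        rw [Nat.mul_succ]
        generalize d * ((m - 1) / d) = t at hdm ⊢
        generalize (m - 1) % d = s at hdm hmod ⊢
        omega
      rw [he]
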